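/- If the vector (n₁',...,n_b') majorizes (n₁,...,n_b) (i.e., the latter is a convex combination of permutations of the former), then for any Borel D ⊆ ℝ² and probability measure μ: Π_{i=1}^b Ψ(1, nᵢ; D) ≤ Π_{i=1}^b Ψ(1, nᵢ'; D). -/
import Mathlib

open MeasureTheory ProbabilityTheory Filter Finset
open scoped ENNReal

/-- The recursively defined path-probability function `Ψ` for spherically
symmetric trees, extended to positive real generation sizes:
`Ψ(b; D) = μ(D)^b` and
`Ψ(b₁,…,bₙ; D) = (∫ Ψ(b₂/b₁,…,bₙ/b₁; D/x₁) dμ(x₁))^{b₁}`. -/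
noncomputable def Psi (μ : Measure ℝ) : (n : ℕ) → (Fin (n + 1) → ℝ) → Set (Fin (n + 1) → ℝ) → ℝ
  | 0, b, D => (μ {x | (fun _ : Fin 1 => x) ∈ D}).toReal ^ (b 0)
  | n + 1, b, D =>
      (∫ x, Psi μ n (fun i => b i.succ / b 0) {y | Fin.cons x y ∈ D} ∂μ) ^ (b 0)

open scoped ENNReal in
lemma ennreal_rpow_sum {ι : Type*} (A : ℝ≥0∞) (s : Finset ι) (p : ι → ℝ)
    (hp : ∀ i ∈ s, 0 ≤ p i) : A ^ (∑ i ∈ s, p i) = ∏ i ∈ s, A ^ p i := by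
  classical
  induction s using Finset.cons_induction with
  | empty => simp
  | cons i s hi ih =>
    rw [Finset.sum_cons, Finset.prod_cons,
      ENNReal.rpow_add_of_nonneg _ _ (hp i (Finset.mem_cons_self i s))
        (Finset.sum_nonneg fun j hj => hp j (Finset.mem_cons_of_mem hj)),
      ih fun j hj => hp j (Finset.mem_cons_of_mem hj)]

/-- if `(n₁',…,n_b')` majorizes `(n₁,…,n_b)` — i.e. the latter is a
convex combination of permutations of the former — then
`Π Ψ(1, nᵢ; D) ≤ Π Ψ(1, nᵢ'; D)`. -/
theorem psi_product_majorization (μ : Measure ℝ) [IsProbabilityMeasure μ]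
    (D : Set (Fin 2 → ℝ)) (hD : MeasurableSet D)
    (b : ℕ) (x x' : Fin b → ℕ) (w : Equiv.Perm (Fin b) → ℝ)
    (hw0 : ∀ σ, 0 ≤ w σ) (hw1 : ∑ σ : Equiv.Perm (Fin b), w σ = 1)
    (hmaj : ∀ i, (x i : ℝ) = ∑ σ : Equiv.Perm (Fin b), w σ * (x' (σ i) : ℝ)) :
    ∏ i : Fin b, Psi μ 1 ![1, (x i : ℝ)] D ≤ ∏ i : Fin b, Psi μ 1 ![1, (x' i : ℝ)] D := by
  classical
  -- the measurable set in the product space and the section-measure function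
  set E : Set (ℝ × ℝ) := {p | Fin.cons p.1 (fun _ => p.2) ∈ D} with hE
  have hEm : MeasurableSet E := by
    have hmap : Measurable fun p : ℝ × ℝ => (Fin.cons p.1 (fun _ => p.2) : Fin 2 → ℝ) := by
      apply measurable_pi_lambda
      intro i
      refine Fin.cases ?_ ?_ i
      · exact measurable_fst
      · intro _; exact measurable_snd
    exact hmap hD
  set H : ℝ → ℝ≥0∞ := fun a => μ (Prod.mk a ⁻¹' E) with hH
  have hHm : Measurable H := measurable_measure_prodMk_left hEm
  have hH1 : ∀ a, H a ≤ 1 := fun a => prob_le_one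
  set F : ℝ → ℝ≥0∞ := fun m => ∫⁻ a, H a ^ m ∂μ with hF
  have hHpow_le : ∀ (m : ℝ), 0 ≤ m → ∀ a, H a ^ m ≤ 1 := by
    intro m hm a
    calc H a ^ m ≤ (1 : ℝ≥0∞) ^ m := ENNReal.rpow_le_rpow (hH1 a) hm
    _ = 1 := ENNReal.one_rpow m
  have hFle1 : ∀ (m : ℝ), 0 ≤ m → F m ≤ 1 := by
    intro m hm
    calc F m ≤ ∫⁻ _, 1 ∂μ := lintegral_mono (hHpow_le m hm)
    _ = 1 := by simp
  -- evaluate `Psi` in terms of `F`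
  have hPsi : ∀ m : ℝ, 0 ≤ m → Psi μ 1 ![1, m] D = (F m).toReal := by
    intro m hm
    have hset : ∀ a : ℝ,
        {t : ℝ | (fun _ : Fin 1 => t) ∈ {y | Fin.cons a y ∈ D}} = Prod.mk a ⁻¹' E := by
      intro a; rfl
    simp only [Psi, Matrix.cons_val_zero, Matrix.cons_val_one, Matrix.head_cons,
      Fin.succ_zero_eq_one, div_one, Real.rpow_one]
    have hint : ∀ a : ℝ,
        (μ {t : ℝ | (fun _ : Fin 1 => t) ∈ {y | Fin.cons a y ∈ D}}).toReal ^ m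
          = ((H a) ^ m).toReal := by
      intro a
      rw [hset a, ENNReal.toReal_rpow]
    calc (∫ a, (μ {t : ℝ | (fun _ : Fin 1 => t) ∈ {y | Fin.cons a y ∈ D}}).toReal ^ m ∂μ)
        = (∫ a, ((H a) ^ m).toReal ∂μ) := by
          exact integral_congr_ae (Filter.Eventually.of_forall hint)
      _ = (F m).toReal := by
          rw [hF]
          exact integral_toReal (hHm.pow_const m).aemeasurable
            (Filter.Eventually.of_forall fun a =>
              lt_of_le_of_lt (hHpow_le m hm a) ENNReal.one_lt_top)
  -- reduce to an inequality in `ℝ≥0∞`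
  have hxr : ∀ i, (0 : ℝ) ≤ (x i : ℝ) := fun i => Nat.cast_nonneg _
  have hxr' : ∀ i, (0 : ℝ) ≤ (x' i : ℝ) := fun i => Nat.cast_nonneg _
  have hmain : ∏ i : Fin b, F (x i) ≤ ∏ i : Fin b, F (x' i) := by
    have hstep : ∀ i : Fin b,
        F (x i) ≤ ∏ σ : Equiv.Perm (Fin b), F (x' (σ i)) ^ w σ := by
      intro i
      have h1 : F (x i) = ∫⁻ a, ∏ σ : Equiv.Perm (Fin b),
          (H a ^ ((x' (σ i) : ℝ))) ^ w σ ∂μ := by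
        rw [hF]
        refine lintegral_congr fun a => ?_
        rw [hmaj i, ennreal_rpow_sum _ _ _
          (fun σ _ => mul_nonneg (hw0 σ) (hxr' (σ i)))]
        refine Finset.prod_congr rfl fun σ _ => ?_
        rw [mul_comm, ENNReal.rpow_mul]
      rw [h1]
      exact ENNReal.lintegral_prod_norm_pow_le _
        (fun σ _ => (hHm.pow_const _).aemeasurable) hw1 (fun σ _ => hw0 σ)
    calc ∏ i : Fin b, F (x i)
        ≤ ∏ i : Fin b, ∏ σ : Equiv.Perm (Fin b), F (x' (σ i)) ^ w σ :=
          Finset.prod_le_prod' fun i _ => hstep i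
      _ = ∏ σ : Equiv.Perm (Fin b), ∏ i : Fin b, F (x' (σ i)) ^ w σ :=
          Finset.prod_comm
      _ = ∏ σ : Equiv.Perm (Fin b), (∏ i : Fin b, F (x' i)) ^ w σ := by
          refine Finset.prod_congr rfl fun σ _ => ?_
          rw [ENNReal.prod_rpow_of_nonneg (hw0 σ)]
          congr 1
          exact Equiv.prod_comp σ fun j => F (x' j)
      _ = ∏ i : Fin b, F (x' i) := by
          rw [← ennreal_rpow_sum _ _ _ (fun σ _ => hw0 σ), hw1, ENNReal.rpow_one]
  have hne : ∏ i : Fin b, F (x' i) ≠ ∞ := by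
    refine ne_of_lt (lt_of_le_of_lt ?_ ENNReal.one_lt_top)
    calc ∏ i : Fin b, F (x' i) ≤ ∏ _i : Fin b, (1 : ℝ≥0∞) :=
        Finset.prod_le_prod' fun i _ => hFle1 _ (hxr' i)
      _ = 1 := by simp
  calc ∏ i : Fin b, Psi μ 1 ![1, (x i : ℝ)] D
      = (∏ i : Fin b, F (x i)).toReal := by
        rw [ENNReal.toReal_prod]
        exact Finset.prod_congr rfl fun i _ => hPsi _ (hxr i)
    _ ≤ (∏ i : Fin b, F (x' i)).toReal := ENNReal.toReal_mono hne hmain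
    _ = ∏ i : Fin b, Psi μ 1 ![1, (x' i : ℝ)] D := by
        rw [ENNReal.toReal_prod]
        exact (Finset.prod_congr rfl fun i _ => (hPsi _ (hxr' i)).symm)
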